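/- For any matrix G ∈ ℝ^{m×n} and strictly positive vectors r ∈ ℝᵐ, s ∈ ℝⁿ with S := 1_mᵀr = 1_nᵀs and S ≥ (r_i + s_j)/2 for all i,j, it holds that Σ_i (G1_n)_i²/(2n√r_i) + Σ_j (Gᵀ1_m)_j²/(2m√s_j) ≤ Σ_{i,j} G_{ij}² √S/√(r_i s_j). -/

import Mathlib

open scoped BigOperators

/-- Pointwise key inequality: for `0 < a`, `0 < b`, `(a+b)/2 ≤ S`,
`1/(2√a) + 1/(2√b) ≤ √S/√(ab)`. -/
lemma stmt_10_key (a b S : ℝ) (ha : 0 < a) (hb : 0 < b) (hS : (a + b) / 2 ≤ S) :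
    1 / (2 * Real.sqrt a) + 1 / (2 * Real.sqrt b) ≤ Real.sqrt S / Real.sqrt (a * b) := by
  have hx : 0 < Real.sqrt a := Real.sqrt_pos.mpr ha
  have hy : 0 < Real.sqrt b := Real.sqrt_pos.mpr hb
  set x := Real.sqrt a
  set y := Real.sqrt b
  have hx2 : x ^ 2 = a := Real.sq_sqrt ha.le
  have hy2 : y ^ 2 = b := Real.sq_sqrt hb.le
  have hS0 : 0 ≤ S := le_trans (by positivity) hS
  have hSsq : (Real.sqrt S) ^ 2 = S := Real.sq_sqrt hS0
  have hsum : x + y ≤ 2 * Real.sqrt S := by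
    nlinarith [sq_nonneg (x - y), sq_nonneg (x + y - 2 * Real.sqrt S),
      Real.sqrt_nonneg S, sq_nonneg (x + y)]
  have hab : Real.sqrt (a * b) = x * y := Real.sqrt_mul ha.le b
  rw [hab]
  calc 1 / (2 * x) + 1 / (2 * y) = (x + y) / (2 * (x * y)) := by
        field_simp; ring
    _ ≤ (2 * Real.sqrt S) / (2 * (x * y)) := by gcongr
    _ = Real.sqrt S / (x * y) := by
        rw [mul_div_mul_left _ _ (by norm_num : (2:ℝ) ≠ 0)]

theorem stmt_10 (m n : ℕ) (hm : 0 < m) (hn : 0 < n)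
    (G : Matrix (Fin m) (Fin n) ℝ)
    (r : Fin m → ℝ) (s : Fin n → ℝ)
    (hr : ∀ i, 0 < r i) (hs : ∀ j, 0 < s j)
    (hsym : ∑ i, r i = ∑ j, s j)
    (hSbig : ∀ i j, (r i + s j) / 2 ≤ ∑ i', r i') :
    ∑ i, (∑ j, G i j) ^ 2 / (2 * n * Real.sqrt (r i))
      + ∑ j, (∑ i, G i j) ^ 2 / (2 * m * Real.sqrt (s j))
    ≤ ∑ i, ∑ j, (G i j) ^ 2 * Real.sqrt (∑ i', r i') / Real.sqrt (r i * s j) := by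
  have hn' : (0:ℝ) < n := by exact_mod_cast hn
  have hm' : (0:ℝ) < m := by exact_mod_cast hm
  have step1 : ∀ i : Fin m, (∑ j, G i j) ^ 2 / (2 * n * Real.sqrt (r i))
      ≤ ∑ j, (G i j) ^ 2 / (2 * Real.sqrt (r i)) := by
    intro i
    have hri : 0 < Real.sqrt (r i) := Real.sqrt_pos.mpr (hr i)
    have cs : (∑ j, G i j) ^ 2 ≤ n * ∑ j, (G i j) ^ 2 := by
      simpa using sq_sum_le_card_mul_sum_sq (s := Finset.univ) (f := G i)
    calc (∑ j, G i j) ^ 2 / (2 * n * Real.sqrt (r i))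
        ≤ (n * ∑ j, (G i j) ^ 2) / (2 * n * Real.sqrt (r i)) := by gcongr
      _ = ∑ j, (G i j) ^ 2 / (2 * Real.sqrt (r i)) := by
          rw [Finset.mul_sum, Finset.sum_div]
          exact Finset.sum_congr rfl fun _ _ => by field_simp
  have step2 : ∀ j : Fin n, (∑ i, G i j) ^ 2 / (2 * m * Real.sqrt (s j))
      ≤ ∑ i, (G i j) ^ 2 / (2 * Real.sqrt (s j)) := by
    intro j
    have hsj : 0 < Real.sqrt (s j) := Real.sqrt_pos.mpr (hs j)
    have cs : (∑ i, G i j) ^ 2 ≤ m * ∑ i, (G i j) ^ 2 := by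
      simpa using sq_sum_le_card_mul_sum_sq (s := Finset.univ) (f := fun i => G i j)
    calc (∑ i, G i j) ^ 2 / (2 * m * Real.sqrt (s j))
        ≤ (m * ∑ i, (G i j) ^ 2) / (2 * m * Real.sqrt (s j)) := by gcongr
      _ = ∑ i, (G i j) ^ 2 / (2 * Real.sqrt (s j)) := by
          rw [Finset.mul_sum, Finset.sum_div]
          exact Finset.sum_congr rfl fun _ _ => by field_simp
  calc ∑ i, (∑ j, G i j) ^ 2 / (2 * n * Real.sqrt (r i))
      + ∑ j, (∑ i, G i j) ^ 2 / (2 * m * Real.sqrt (s j))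
      ≤ (∑ i, ∑ j, (G i j) ^ 2 / (2 * Real.sqrt (r i)))
        + ∑ j, ∑ i, (G i j) ^ 2 / (2 * Real.sqrt (s j)) := by
        gcongr with i _ j _ <;> [exact step1 i; exact step2 j]
    _ = ∑ i, ∑ j, ((G i j) ^ 2 / (2 * Real.sqrt (r i))
        + (G i j) ^ 2 / (2 * Real.sqrt (s j))) := by
        rw [Finset.sum_comm (f := fun j i => (G i j) ^ 2 / (2 * Real.sqrt (s j))),
          ← Finset.sum_add_distrib]
        exact Finset.sum_congr rfl fun i _ => (Finset.sum_add_distrib).symm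
    _ ≤ ∑ i, ∑ j, (G i j) ^ 2 * Real.sqrt (∑ i', r i') / Real.sqrt (r i * s j) := by
        apply Finset.sum_le_sum; intro i _
        apply Finset.sum_le_sum; intro j _
        have key := stmt_10_key (r i) (s j) (∑ i', r i') (hr i) (hs j) (hSbig i j)
        have hG : 0 ≤ (G i j) ^ 2 := sq_nonneg _
        calc (G i j) ^ 2 / (2 * Real.sqrt (r i)) + (G i j) ^ 2 / (2 * Real.sqrt (s j))
            = (G i j) ^ 2 * (1 / (2 * Real.sqrt (r i)) + 1 / (2 * Real.sqrt (s j))) := by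
              ring
          _ ≤ (G i j) ^ 2 * (Real.sqrt (∑ i', r i') / Real.sqrt (r i * s j)) :=
              mul_le_mul_of_nonneg_left key hG
          _ = (G i j) ^ 2 * Real.sqrt (∑ i', r i') / Real.sqrt (r i * s j) := by ring
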